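/- Let μ > 0, r ≥ 1 an integer, p ∈ ℕ, q ≥ 0, and d ≥ 1 with p + (r - 1/2)μ < q. Then the function l(u) = (1 + Σ_{i=1}^d u_i^{-1/μ}(1-u_i)^{-1/μ})^{2(p - q + rμ)} is Lebesgue integrable on (0,1)^d. -/

import Mathlib

open MeasureTheory Real Set

private theorem aux_one_add_sum {ι : Type*} (x : ι → ℝ) (s : Finset ι)
    (hx : ∀ i ∈ s, 0 ≤ x i) :
    1 + ∑ i ∈ s, x i ≤ ∏ i ∈ s, (1 + x i) := by
  classical
  induction s using Finset.induction_on with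
  | empty => simp
  | @insert a t ha ih =>
    rw [Finset.sum_insert ha, Finset.prod_insert ha]
    have h0 : ∀ i ∈ t, 0 ≤ x i := fun i hi => hx i (Finset.mem_insert_of_mem hi)
    have hS : 0 ≤ ∑ i ∈ t, x i := Finset.sum_nonneg h0
    have hxa : 0 ≤ x a := hx a (Finset.mem_insert_self a t)
    have := ih h0
    nlinarith

private theorem aux_pow_bound (x α : ℝ) (hx : 0 ≤ x) (hα : 0 ≤ α) :
    (1 + x) ^ α ≤ 2 ^ α * (1 + x ^ α) := by
  have hxα : 0 ≤ x ^ α := Real.rpow_nonneg hx α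
  have h2α : 0 ≤ (2:ℝ) ^ α := Real.rpow_nonneg (by norm_num) α
  rcases le_total x 1 with h | h
  · have h1 : (1 + x) ^ α ≤ 2 ^ α :=
      Real.rpow_le_rpow (by linarith) (by linarith) hα
    nlinarith
  · have h1 : (1 + x) ^ α ≤ (2 * x) ^ α :=
      Real.rpow_le_rpow (by linarith) (by linarith) hα
    rw [Real.mul_rpow (by norm_num) hx] at h1
    nlinarith

private theorem aux_prod_bound (t s : ℝ) (ht0 : 0 < t) (ht1 : t < 1) (hs : 0 ≤ s) :
    t ^ (-s) * (1 - t) ^ (-s) ≤ 2 ^ s * (t ^ (-s) + (1 - t) ^ (-s)) := by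
  have h2s : ((1:ℝ)/2) ^ (-s) = 2 ^ s := by
    rw [one_div, Real.inv_rpow (by norm_num), Real.rpow_neg (by norm_num), inv_inv]
  have ht0' : 0 ≤ t ^ (-s) := Real.rpow_nonneg ht0.le _
  have ht1' : 0 ≤ (1 - t) ^ (-s) := Real.rpow_nonneg (by linarith) _
  rcases le_total t (1/2) with h | h
  · have hb : (1 - t) ^ (-s) ≤ 2 ^ s := by
      rw [← h2s]
      exact Real.rpow_le_rpow_of_nonpos (by norm_num) (by linarith) (by linarith)
    nlinarith
  · have hb : t ^ (-s) ≤ 2 ^ s := by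
      rw [← h2s]
      exact Real.rpow_le_rpow_of_nonpos (by norm_num) (by linarith) (by linarith)
    nlinarith

theorem stmt_9 (μ : ℝ) (hμ : 0 < μ) (r : ℕ) (hr : 1 ≤ r) (p : ℕ) (q : ℝ) (hq : 0 ≤ q)
    (d : ℕ) (hd : 1 ≤ d)
    (hcond : (p : ℝ) + ((r : ℝ) - 1/2) * μ < q) :
    MeasureTheory.IntegrableOn
      (fun u : Fin d → ℝ =>
        (1 + ∑ i, (u i) ^ (-1/μ) * (1 - u i) ^ (-1/μ)) ^ (2 * ((p : ℝ) - q + r * μ)))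
      (Set.univ.pi fun _ : Fin d => Set.Ioo (0:ℝ) 1) := by
  set α : ℝ := 2 * ((p : ℝ) - q + r * μ) with hα
  have hαμ : α < μ := by nlinarith
  set S : Set (Fin d → ℝ) := Set.univ.pi fun _ : Fin d => Set.Ioo (0:ℝ) 1 with hSdef
  have hS : MeasurableSet S := MeasurableSet.univ_pi (fun _ => measurableSet_Ioo)
  have hm : Measurable (fun u : Fin d → ℝ =>
      (1 + ∑ i, (u i) ^ (-1/μ) * (1 - u i) ^ (-1/μ)) ^ α) := by
    fun_prop
  -- basic positivity facts about the summands
  have hterm : ∀ (u : Fin d → ℝ), u ∈ S → ∀ i : Fin d,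
      0 ≤ (u i) ^ (-1/μ) * (1 - u i) ^ (-1/μ) := by
    intro u hu i
    have hui := (Set.mem_univ_pi.1 hu) i
    exact mul_nonneg (Real.rpow_nonneg hui.1.le _)
      (Real.rpow_nonneg (by linarith [hui.2]) _)
  rcases le_or_gt α 0 with hα0 | hα0
  · -- nonpositive exponent: the function is bounded by 1 on a finite-measure set
    have hSfin : volume S < ⊤ := by
      rw [hSdef, volume_pi_pi]
      simp [Real.volume_Ioo]
    refine Integrable.mono' (g := fun _ => (1:ℝ))
      (integrableOn_const hSfin.ne) hm.aestronglyMeasurable.restrict ?_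
    filter_upwards [ae_restrict_mem hS] with u hu
    have hsum : 0 ≤ ∑ i, (u i) ^ (-1/μ) * (1 - u i) ^ (-1/μ) :=
      Finset.sum_nonneg (fun i _ => hterm u hu i)
    have hbase : (1:ℝ) ≤ 1 + ∑ i, (u i) ^ (-1/μ) * (1 - u i) ^ (-1/μ) := by linarith
    rw [Real.norm_eq_abs, abs_of_nonneg (Real.rpow_nonneg (by linarith) _)]
    exact Real.rpow_le_one_of_one_le_of_nonpos hbase hα0
  · -- positive exponent
    set s : ℝ := α / μ with hsdef
    have hs0 : 0 < s := div_pos hα0 hμ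
    have hs1 : s < 1 := (div_lt_one hμ).2 hαμ
    set F : ℝ → ℝ := (Set.Ioo (0:ℝ) 1).indicator
      (fun x => (2:ℝ) ^ α * (1 + (2:ℝ) ^ s * (x ^ (-s) + (1 - x) ^ (-s)))) with hFdef
    have hIoo1 : IntegrableOn (fun x : ℝ => x ^ (-s)) (Ioo 0 1) := by
      have h1 := intervalIntegral.intervalIntegrable_rpow'
        (a := (0:ℝ)) (b := 1) (r := -s) (by linarith)
      rw [intervalIntegrable_iff] at h1
      refine h1.mono_set ?_
      rw [uIoc_of_le (zero_le_one)]
      exact Ioo_subset_Ioc_self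
    have hIoo2 : IntegrableOn (fun x : ℝ => (1 - x) ^ (-s)) (Ioo 0 1) := by
      have h1 := (intervalIntegral.intervalIntegrable_rpow'
        (a := (0:ℝ)) (b := 1) (r := -s) (by linarith)).comp_sub_left 1
      rw [intervalIntegrable_iff] at h1
      norm_num at h1
      exact h1.mono_set Ioo_subset_Ioc_self
    have hFint : Integrable F := by
      apply IntegrableOn.integrable_indicator _ measurableSet_Ioo
      apply Integrable.const_mul
      apply Integrable.add
      · exact integrableOn_const (by simp [Real.volume_Ioo])
      · exact (hIoo1.add hIoo2).const_mul _
    have hg : Integrable (fun u : Fin d → ℝ => ∏ i, F (u i)) :=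
      Integrable.fintype_prod (𝕜 := ℝ) (f := fun _ : Fin d => F) (fun _ => hFint)
    refine Integrable.mono' hg.integrableOn hm.aestronglyMeasurable.restrict ?_
    filter_upwards [ae_restrict_mem hS] with u hu
    have hx0 : ∀ i : Fin d, 0 ≤ (u i) ^ (-1/μ) * (1 - u i) ^ (-1/μ) := hterm u hu
    have hsum0 : 0 ≤ ∑ i, (u i) ^ (-1/μ) * (1 - u i) ^ (-1/μ) :=
      Finset.sum_nonneg (fun i _ => hx0 i)
    rw [Real.norm_eq_abs, abs_of_nonneg (Real.rpow_nonneg (by linarith) _)]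
    -- step 1 : compare with the product
    have h1 : (1 + ∑ i, (u i) ^ (-1/μ) * (1 - u i) ^ (-1/μ)) ^ α
        ≤ ∏ i, (1 + (u i) ^ (-1/μ) * (1 - u i) ^ (-1/μ)) ^ α := by
      rw [Real.finset_prod_rpow _ _ (fun i _ => by linarith [hx0 i]) α]
      exact Real.rpow_le_rpow (by linarith)
        (aux_one_add_sum _ _ (fun i _ => hx0 i)) hα0.le
    refine h1.trans (Finset.prod_le_prod
      (fun i _ => Real.rpow_nonneg (by linarith [hx0 i]) α) (fun i _ => ?_))
    -- per coordinate bound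
    have hui := (Set.mem_univ_pi.1 hu) i
    obtain ⟨hu0, hu1⟩ := hui
    have h1u : (0:ℝ) < 1 - u i := by linarith
    have hF : F (u i) = (2:ℝ) ^ α * (1 + (2:ℝ) ^ s *
        ((u i) ^ (-s) + (1 - u i) ^ (-s))) := by
      rw [hFdef, Set.indicator_of_mem (Set.mem_Ioo.2 ⟨hu0, hu1⟩)]
    rw [hF]
    have hxα : ((u i) ^ (-1/μ) * (1 - u i) ^ (-1/μ)) ^ α
        = (u i) ^ (-s) * (1 - u i) ^ (-s) := by
      rw [Real.mul_rpow (Real.rpow_nonneg hu0.le _) (Real.rpow_nonneg h1u.le _),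
        ← Real.rpow_mul hu0.le, ← Real.rpow_mul h1u.le]
      have : -1/μ * α = -s := by
        rw [hsdef]; field_simp
      rw [this]
    have h2 := aux_pow_bound _ α (hx0 i) hα0.le
    rw [hxα] at h2
    refine h2.trans ?_
    have h3 := aux_prod_bound (u i) s hu0 hu1 hs0.le
    have h2α : 0 ≤ (2:ℝ) ^ α := Real.rpow_nonneg (by norm_num) α
    nlinarith
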